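/- arXiv:1801.07114 — 2 statements merged into one kernel-verified Lean document; each statement's English description precedes it below -/
import Mathlib

section
/- Let 0 ≤ x^L < x^U be reals. Then for all x ∈ [x^L, x^U], the secant sec(x) = ((tanh(x^U) - tanh(x^L))/(x^U - x^L))·x + (x^U·tanh(x^L) - x^L·tanh(x^U))/(x^U - x^L) satisfies sec(x) ≤ tanh(x). -/
lemma my_hasDerivAt_tanh (x : ℝ) : HasDerivAt Real.tanh (1 / (Real.cosh x)^2) x := by
  have h := (Real.hasDerivAt_sinh x).div (Real.hasDerivAt_cosh x) (Real.cosh_pos x).ne'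
  have hs : Real.cosh x * Real.cosh x - Real.sinh x * Real.sinh x = 1 := by
    have := Real.cosh_sq_sub_sinh_sq x; nlinarith [this]
  have : Real.tanh = fun y => Real.sinh y / Real.cosh y := by
    funext y; exact Real.tanh_eq_sinh_div_cosh y
  rw [this]
  refine h.congr_deriv ?_
  field_simp
  nlinarith [hs]

lemma my_deriv_tanh : deriv Real.tanh = fun x => 1 / (Real.cosh x)^2 := by
  funext x; exact (my_hasDerivAt_tanh x).deriv

lemma my_tanh_concave : StrictConcaveOn ℝ (Set.Ici (0:ℝ)) Real.tanh := by
  apply strictConcaveOn_of_deriv2_neg (convex_Ici 0) (fun y _ => (my_hasDerivAt_tanh y).continuousAt.continuousWithinAt)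
  intro x hx
  rw [interior_Ici] at hx
  have hx : (0:ℝ) < x := hx
  have hd2 : HasDerivAt (deriv Real.tanh) (-2 * Real.sinh x / (Real.cosh x)^3) x := by
    rw [my_deriv_tanh]
    have h := ((Real.hasDerivAt_cosh x).pow 2)
    have := (hasDerivAt_const x (1:ℝ)).div h (pow_ne_zero 2 (Real.cosh_pos x).ne')
    refine this.congr_deriv ?_
    have hc := (Real.cosh_pos x).ne'
    simp only [Pi.pow_apply]
    field_simp
    ring
  have : deriv^[2] Real.tanh x = -2 * Real.sinh x / (Real.cosh x)^3 := by
    simp only [Function.iterate_succ, Function.iterate_zero, Function.comp_apply, id]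
    exact hd2.deriv
  rw [this]
  have hs : 0 < Real.sinh x := by rwa [Real.sinh_pos_iff]
  have hc := Real.cosh_pos x
  have : 0 < (Real.cosh x)^3 := by positivity
  exact div_neg_of_neg_of_pos (by linarith) this

theorem tanh_secant_underestimates_on_pos (xL xU : ℝ) (h1 : 0 ≤ xL) (h2 : xL < xU) :
    ∀ x ∈ Set.Icc xL xU,
      ((Real.tanh xU - Real.tanh xL) / (xU - xL)) * x +
          (xU * Real.tanh xL - xL * Real.tanh xU) / (xU - xL) ≤ Real.tanh x := by
  intro x hx
  obtain ⟨hxl, hxu⟩ := hx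
  have hd : (0:ℝ) < xU - xL := by linarith
  set a := (xU - x) / (xU - xL) with ha_def
  set b := (x - xL) / (xU - xL) with hb_def
  have ha : 0 ≤ a := by apply div_nonneg <;> linarith
  have hb : 0 ≤ b := by apply div_nonneg <;> linarith
  have hne : xU - xL ≠ 0 := hd.ne'
  have hab : a + b = 1 := by rw [ha_def, hb_def]; field_simp; ring
  have hcomb : a * xL + b * xU = x := by rw [ha_def, hb_def]; field_simp; ring
  have key := my_tanh_concave.concaveOn.2 (Set.mem_Ici.2 h1)
    (Set.mem_Ici.2 (by linarith : (0:ℝ) ≤ xU)) ha hb hab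
  simp only [smul_eq_mul, hcomb] at key
  have : ((Real.tanh xU - Real.tanh xL) / (xU - xL)) * x +
      (xU * Real.tanh xL - xL * Real.tanh xU) / (xU - xL)
      = a * Real.tanh xL + b * Real.tanh xU := by
    have hne : xU - xL ≠ 0 := hd.ne'
    rw [ha_def, hb_def]
    field_simp
    ring
  linarith [key, this.ge, this.le]
end

section
/- For any x^U > 0 there exists a unique x_c ≤ 0 with 1 - tanh²(x_c) = (tanh(x^U) - tanh(x_c))/(x^U - x_c); i.e., the tangent line to tanh at x_c passes through the point (x^U, tanh(x^U)). -/
open Real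

lemma my_one_sub_tanh_sq (x : ℝ) : 1 - Real.tanh x ^ 2 = 1 / Real.cosh x ^ 2 := by
  have hc := Real.cosh_pos x
  rw [Real.tanh_eq_sinh_div_cosh, div_pow]
  field_simp
  exact Real.cosh_sq_sub_sinh_sq x

lemma my_one_sub_tanh_sq_pos (x : ℝ) : 0 < 1 - Real.tanh x ^ 2 := by
  rw [my_one_sub_tanh_sq]
  positivity

lemma my_tanh_hasDerivAt (x : ℝ) : HasDerivAt Real.tanh (1 - Real.tanh x ^ 2) x := by
  have hc := Real.cosh_pos x
  have hfun : Real.tanh = fun y => Real.sinh y / Real.cosh y :=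
    funext Real.tanh_eq_sinh_div_cosh
  have hd := (Real.hasDerivAt_sinh x).div (Real.hasDerivAt_cosh x) (ne_of_gt hc)
  rw [hfun]
  refine hd.congr_deriv ?_
  field_simp

lemma my_continuous_tanh : Continuous Real.tanh := by
  have : Real.tanh = fun y => Real.sinh y / Real.cosh y :=
    funext Real.tanh_eq_sinh_div_cosh
  rw [this]
  exact Real.continuous_sinh.div Real.continuous_cosh fun x => ne_of_gt (Real.cosh_pos x)

lemma my_tanh_neg_of_neg {x : ℝ} (hx : x < 0) : Real.tanh x < 0 := by
  rw [Real.tanh_eq_sinh_div_cosh]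
  exact div_neg_of_neg_of_pos (Real.sinh_neg_iff.2 hx) (Real.cosh_pos x)

lemma my_tanh_pos_of_pos {x : ℝ} (hx : 0 < x) : 0 < Real.tanh x := by
  rw [Real.tanh_eq_sinh_div_cosh]
  exact div_pos (Real.sinh_pos_iff.2 hx) (Real.cosh_pos x)

lemma my_tanh_lt_self {x : ℝ} (hx : 0 < x) : Real.tanh x < x := by
  have hmono : StrictMonoOn (fun y => y - Real.tanh y) (Set.Ici (0:ℝ)) := by
    apply strictMonoOn_of_deriv_pos (convex_Ici _)
    · exact (continuous_id.sub my_continuous_tanh).continuousOn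
    · intro y hy
      rw [interior_Ici] at hy
      have hd : HasDerivAt (fun y => y - Real.tanh y) (1 - (1 - Real.tanh y ^ 2)) y :=
        (hasDerivAt_id y).sub (my_tanh_hasDerivAt y)
      rw [hd.deriv]
      have := my_tanh_pos_of_pos hy
      nlinarith
  have := hmono (Set.self_mem_Ici) (Set.mem_Ici.2 hx.le) hx
  simp only [Real.tanh_zero, sub_zero] at this
  linarith

theorem tanh_tangency_exists_unique (xU : ℝ) (h : 0 < xU) :
    ∃! xc : ℝ, xc ≤ 0 ∧
      1 - Real.tanh xc ^ 2 = (Real.tanh xU - Real.tanh xc) / (xU - xc) := by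
  set f : ℝ → ℝ := fun x => (1 - Real.tanh x ^ 2) * (xU - x) - (Real.tanh xU - Real.tanh x)
    with hf
  have hderiv : ∀ x : ℝ, HasDerivAt f
      ((-2 * Real.tanh x * (1 - Real.tanh x ^ 2)) * (xU - x)) x := by
    intro x
    have h1 : HasDerivAt (fun y => 1 - Real.tanh y ^ 2)
        (-(2 * Real.tanh x ^ 1 * (1 - Real.tanh x ^ 2))) x :=
      ((my_tanh_hasDerivAt x).pow 2).const_sub 1
    have h2 : HasDerivAt (fun y => xU - y) (-1 : ℝ) x := by
      simpa using (hasDerivAt_id x).const_sub xU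
    have h3 : HasDerivAt (fun y => Real.tanh xU - Real.tanh y)
        (-(1 - Real.tanh x ^ 2)) x := (my_tanh_hasDerivAt x).const_sub _
    have := ((h1.mul h2).sub h3)
    refine this.congr_deriv ?_
    rw [my_one_sub_tanh_sq]
    ring
  have hcont : Continuous f :=
    ((continuous_const.sub (my_continuous_tanh.pow 2)).mul
      (continuous_const.sub continuous_id)).sub
      (continuous_const.sub my_continuous_tanh)
  have hmono : StrictMonoOn f (Set.Iic (0:ℝ)) := by
    apply strictMonoOn_of_deriv_pos (convex_Iic _) hcont.continuousOn
    intro x hx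
    rw [interior_Iic] at hx
    rw [(hderiv x).deriv]
    have h1 : Real.tanh x < 0 := my_tanh_neg_of_neg hx
    have h2 := my_one_sub_tanh_sq_pos x
    have h3 : 0 < xU - x := by linarith [Set.mem_Iio.1 hx]
    exact mul_pos (mul_pos (by linarith) h2) h3
  -- f 0 > 0
  have hf0 : 0 < f 0 := by
    simp only [hf, Real.tanh_zero, sub_zero]
    have := my_tanh_lt_self h
    nlinarith
  -- f (-(xU+8)) < 0
  obtain ⟨a, ha⟩ : ∃ a : ℝ, a = xU + 8 := ⟨_, rfl⟩
  have hapos : (0:ℝ) < a := by linarith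
  have hfa : f (-a) < 0 := by
    have hcosh : Real.cosh (-a) = Real.cosh a := Real.cosh_neg a
    have hexp : a + 1 ≤ Real.exp a := by linarith [Real.add_one_le_exp a]
    have hcosh_ge : Real.cosh a ≥ Real.exp a / 2 := by
      rw [Real.cosh_eq]
      have := (Real.exp_pos (-a)).le
      linarith
    have hcosh_sq : Real.cosh (-a) ^ 2 > a ^ 2 / 4 := by
      rw [hcosh]
      nlinarith [Real.exp_pos a]
    -- 1 - tanh(-a)^2 < 4 / a^2
    have h1 : 1 - Real.tanh (-a) ^ 2 < 4 / a ^ 2 := by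
      rw [my_one_sub_tanh_sq]
      rw [div_lt_div_iff₀ (by positivity) (by positivity)]
      nlinarith
    -- tanh a > 1/2
    have htanha : Real.tanh a > 1 / 2 := by
      rw [Real.tanh_eq_sinh_div_cosh, gt_iff_lt, lt_div_iff₀ (Real.cosh_pos a),
        Real.sinh_eq, Real.cosh_eq]
      have h3 : Real.exp a ≥ 9 := by linarith
      have h4 : Real.exp (-a) ≤ 1 := by
        rw [Real.exp_le_one_iff]; linarith
      have h5 := Real.exp_pos (-a)
      linarith
    have htanhU : 0 < Real.tanh xU := my_tanh_pos_of_pos h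
    have hta : Real.tanh (-a) = - Real.tanh a := Real.tanh_neg a
    -- (1 - tanh(-a)^2) * (xU + a) ≤ 4 (xU + a)/a^2 < 1/2
    have hkey : (4 / a ^ 2) * (xU + a) < 1 / 2 := by
      rw [div_mul_eq_mul_div, div_lt_div_iff₀ (by positivity) (by norm_num)]
      nlinarith [ha, sq_nonneg xU]
    have hlhs : (1 - Real.tanh (-a) ^ 2) * (xU - (-a)) < 1 / 2 := by
      have hpos : (0:ℝ) < xU + a := by linarith
      have h2 : (1 - Real.tanh (-a) ^ 2) * (xU + a) < (4 / a ^ 2) * (xU + a) :=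
        mul_lt_mul_of_pos_right h1 hpos
      have hsub : xU - (-a) = xU + a := by ring
      rw [hsub]
      linarith
    have hfav : f (-a) = (1 - Real.tanh (-a) ^ 2) * (xU - (-a)) - (Real.tanh xU - Real.tanh (-a)) := rfl
    rw [hfav]
    nlinarith [hlhs, hta, htanha, htanhU]
  -- IVT
  have hab : (-a : ℝ) ≤ 0 := by linarith
  obtain ⟨xc, hxc_mem, hxc_eq⟩ :=
    intermediate_value_Icc hab hcont.continuousOn ⟨hfa.le, hf0.le⟩
  have hxc_le : xc ≤ 0 := hxc_mem.2
  have hne : xU - xc ≠ 0 := by intro hz; nlinarith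
  have heq_iff : ∀ y : ℝ, y ≤ 0 →
      ((1 - Real.tanh y ^ 2 = (Real.tanh xU - Real.tanh y) / (xU - y)) ↔ f y = 0) := by
    intro y hy
    have hyne : xU - y ≠ 0 := by intro hz; nlinarith
    have hfy : f y = (1 - Real.tanh y ^ 2) * (xU - y) - (Real.tanh xU - Real.tanh y) := rfl
    rw [eq_div_iff hyne, hfy]
    constructor <;> intro hh <;> linarith
  refine ⟨xc, ⟨hxc_le, (heq_iff xc hxc_le).2 hxc_eq⟩, ?_⟩
  rintro y ⟨hy_le, hy_eq⟩
  have hy0 : f y = 0 := (heq_iff y hy_le).1 hy_eq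
  exact hmono.injOn (Set.mem_Iic.2 hy_le) (Set.mem_Iic.2 hxc_le) (by rw [hy0, hxc_eq])
end
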